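/- arXiv:2202.13732 — 3 statements merged into one kernel-verified Lean document; each statement's English description precedes it below -/
import Mathlib

section
/- Let H be a real Hilbert space, let F : ℝ → H be differentiable with F(t) ≠ 0 for all t, and let S, A : ℝ → (H →L H) be families of bounded linear operators such that: S is differentiable (in the operator norm) with derivative S′, each S(t) is self-adjoint (⟨S(t)v, w⟩ = ⟨v, S(t)w⟩ for all v,w), each A(t) is skew-adjoint (⟨A(t)v, w⟩ = −⟨v, A(t)w⟩ for all v,w), and F′(t) = S(t)F(t) + A(t)F(t) for all t. Define the frequency function N(t) = −⟨S(t)F(t), F(t)⟩ / ‖F(t)‖². Then: (i) (1/2) d/dt ‖F(t)‖² + N(t)‖F(t)‖² = 0 for all t; and (ii) N is differentiable with N′(t) ≤ (⟨−S′(t)F(t), F(t)⟩ − ⟨[S(t),A(t)]F(t), F(t)⟩) / ‖F(t)‖² for all t, where [S,A] = S∘A − A∘S is the commutator. -/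
open scoped RealInnerProductSpace

/-- Abstract Carleman-commutator energy identity and frequency function
estimate: if `F' = S F + A F` with `S` self-adjoint differentiable and `A`
skew-adjoint, and `N = -⟪S F, F⟫ / ‖F‖²` is the frequency function, then
`(1/2)(‖F‖²)' + N ‖F‖² = 0` and `N' ≤ (⟪-S' F, F⟫ - ⟪[S,A] F, F⟫)/‖F‖²`. -/
theorem frequency_function_estimate {H : Type*}
    [NormedAddCommGroup H] [InnerProductSpace ℝ H] [CompleteSpace H]
    (F F' : ℝ → H) (S S' A : ℝ → H →L[ℝ] H) (N : ℝ → ℝ)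
    (hF : ∀ t, HasDerivAt F (F' t) t)
    (hFne : ∀ t, F t ≠ 0)
    (hS : ∀ t, HasDerivAt S (S' t) t)
    (hSsym : ∀ t, ∀ v w : H, ⟪S t v, w⟫ = ⟪v, S t w⟫)
    (hAskew : ∀ t, ∀ v w : H, ⟪A t v, w⟫ = -⟪v, A t w⟫)
    (heq : ∀ t, F' t = S t (F t) + A t (F t))
    (hN : ∀ t, N t = -⟪S t (F t), F t⟫ / ‖F t‖ ^ 2) :
    (∀ t, HasDerivAt (fun s => ‖F s‖ ^ 2) (-(2 * N t * ‖F t‖ ^ 2)) t) ∧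
    (∀ t, ∃ d : ℝ, HasDerivAt N d t ∧
      d ≤ (⟪-(S' t (F t)), F t⟫
            - ⟪(S t ∘L A t - A t ∘L S t) (F t), F t⟫) / ‖F t‖ ^ 2) := by
  have hEpos : ∀ t, (0:ℝ) < ‖F t‖ ^ 2 := fun t =>
    pow_pos (norm_pos_iff.mpr (hFne t)) 2
  have hAzero : ∀ t, ⟪A t (F t), F t⟫ = 0 := by
    intro t
    have h := hAskew t (F t) (F t)
    rw [real_inner_comm (A t (F t)) (F t)] at h
    linarith
  -- energy derivative
  have hE : ∀ t, HasDerivAt (fun s => ‖F s‖ ^ 2) (2 * ⟪S t (F t), F t⟫) t := by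
    intro t
    have h1 := (hF t).inner ℝ (hF t)
    have hAz2 : ⟪F t, A t (F t)⟫ = 0 := by rw [real_inner_comm]; exact hAzero t
    have h2 : ⟪F t, F' t⟫ + ⟪F' t, F t⟫ = 2 * ⟪S t (F t), F t⟫ := by
      rw [heq, inner_add_left, inner_add_right, hAzero t, hAz2,
        real_inner_comm (F t) (S t (F t))]
      ring
    rw [h2] at h1
    have hfun : (fun s => ‖F s‖ ^ 2) = fun s => ⟪F s, F s⟫ :=
      funext fun s => (real_inner_self_eq_norm_sq (F s)).symm
    rw [hfun]
    exact h1
  constructor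
  · intro t
    have := hE t
    have hNt : -(2 * N t * ‖F t‖ ^ 2) = 2 * ⟪S t (F t), F t⟫ := by
      have h0 := (hEpos t).ne'
      rw [hN t]
      field_simp
      exact mul_div_cancel_right₀ _ (norm_ne_zero_iff.mpr (hFne t))
    rw [hNt]
    exact this
  · intro t
    set D := ⟪S t (F t), F t⟫ with hD
    set E := ‖F t‖ ^ 2 with hEdef
    have hEne : E ≠ 0 := ne_of_gt (hEpos t)
    have hDder : HasDerivAt (fun s => ⟪S s (F s), F s⟫)
        (⟪S t (F t), F' t⟫ + ⟪S' t (F t) + S t (F' t), F t⟫) t :=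
      ((hS t).clm_apply (hF t)).inner ℝ (hF t)
    have hNeq : N = fun s => -⟪S s (F s), F s⟫ / ‖F s‖ ^ 2 := funext hN
    have hNd : HasDerivAt N
        ((-(⟪S t (F t), F' t⟫ + ⟪S' t (F t) + S t (F' t), F t⟫) * E
          - (-D) * (2 * D)) / E ^ 2) t := by
      rw [hNeq]
      exact (hDder.neg).div (hE t) hEne
    refine ⟨_, hNd, ?_⟩
    -- auxiliary identities
    have e1 : ⟪S t (F t), F' t⟫ = ⟪S t (F t), S t (F t)⟫ + ⟪S t (F t), A t (F t)⟫ := by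
      rw [heq, inner_add_right]
    have e2 : ⟪S t (F' t), F t⟫ = ⟪S t (F t), F' t⟫ := by
      rw [hSsym t (F' t) (F t), real_inner_comm]
    have e3 : ⟪(S t ∘L A t - A t ∘L S t) (F t), F t⟫ = 2 * ⟪S t (F t), A t (F t)⟫ := by
      simp only [ContinuousLinearMap.sub_apply, ContinuousLinearMap.comp_apply,
        inner_sub_left]
      rw [hSsym t (A t (F t)) (F t), hAskew t (S t (F t)) (F t),
        real_inner_comm (A t (F t)) (S t (F t))]
      ring
    have cs : D ^ 2 ≤ ⟪S t (F t), S t (F t)⟫ * E := by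
      have := real_inner_mul_inner_self_le (S t (F t)) (F t)
      rw [real_inner_self_eq_norm_sq (F t)] at this
      calc D ^ 2 = D * D := sq D
        _ ≤ ⟪S t (F t), S t (F t)⟫ * E := by
            rw [hEdef]
            simpa [real_inner_self_eq_norm_mul_norm, real_inner_self_eq_norm_sq] using this
    rw [inner_add_left, e2, e1, e3, inner_neg_left]
    rw [div_le_div_iff₀ (by positivity) (hEpos t), ← hEdef]
    have hSS : 0 ≤ ⟪S t (F t), S t (F t)⟫ := real_inner_self_nonneg
    nlinarith [mul_le_mul_of_nonneg_right cs (hEpos t).le, hEpos t]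
end

section
/- Let T > 0, h > 0, C₀ ∈ (0,1) and C ≥ 0. Let y : [0,T] → ℝ be differentiable and strictly positive, and let N : [0,T] → ℝ be differentiable, such that for all t ∈ (0,T): (1/2) y′(t) + N(t) y(t) = 0 and N′(t) ≤ ((1+C₀)/(T − t + h)) N(t) + C/h². Then for any 0 < t₁ < t₂ < t₃ ≤ T, one has y(t₂)^{1+M} ≤ y(t₁)^M · y(t₃) · e^D, where M = (∫_{t₂}^{t₃} (T − t + h)^{−(1+C₀)} dt) / (∫_{t₁}^{t₂} (T − t + h)^{−(1+C₀)} dt) and D = 2(1+M)(t₃ − t₁)² C / h². -/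
open Set MeasureTheory intervalIntegral

set_option maxHeartbeats 1000000 in
/-- Logarithmic convexity lemma: if `y > 0` satisfies `(1/2) y' + N y = 0` with
`N' ≤ ((1+C₀)/(T-t+h)) N + C/h²` on `(0,T)`, then for `0 < t₁ < t₂ < t₃ ≤ T`,
`y(t₂)^{1+M} ≤ y(t₁)^M y(t₃) e^D` with the explicit `M` and `D`. -/
theorem log_convexity_lemma (T h C₀ C : ℝ) (hT : 0 < T) (hh : 0 < h)
    (hC₀ : C₀ ∈ Set.Ioo (0 : ℝ) 1) (hC : 0 ≤ C)
    (y N y' N' : ℝ → ℝ)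
    (hy : ∀ t ∈ Set.Icc (0 : ℝ) T, HasDerivAt y (y' t) t)
    (hN : ∀ t ∈ Set.Icc (0 : ℝ) T, HasDerivAt N (N' t) t)
    (hypos : ∀ t ∈ Set.Icc (0 : ℝ) T, 0 < y t)
    (heq : ∀ t ∈ Set.Ioo (0 : ℝ) T, (1 / 2) * y' t + N t * y t = 0)
    (hineq : ∀ t ∈ Set.Ioo (0 : ℝ) T,
      N' t ≤ ((1 + C₀) / (T - t + h)) * N t + C / h ^ 2) :
    ∀ t₁ t₂ t₃ : ℝ, 0 < t₁ → t₁ < t₂ → t₂ < t₃ → t₃ ≤ T →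
      ∀ M D : ℝ,
        M = (∫ t in t₂..t₃, (T - t + h) ^ (-(1 + C₀))) /
            (∫ t in t₁..t₂, (T - t + h) ^ (-(1 + C₀))) →
        D = 2 * (1 + M) * (t₃ - t₁) ^ 2 * C / h ^ 2 →
        y t₂ ^ (1 + M) ≤ y t₁ ^ M * y t₃ * Real.exp D := by
  obtain ⟨hC₀0, hC₀1⟩ := hC₀
  intro t₁ t₂ t₃ ht₁ h₁₂ h₂₃ h₃T M D hM hD
  have ht₂T : t₂ < T := lt_of_lt_of_le h₂₃ h₃T
  have ht₁T : t₁ < T := h₁₂.trans ht₂T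
  have hq : (0:ℝ) ≤ C / h ^ 2 := div_nonneg hC (by positivity)
  set p : ℝ := 1 + C₀ with hpdef
  have hp0 : 0 < p := by rw [hpdef]; linarith
  set w : ℝ → ℝ := fun t => (T - t + h) ^ (-p) with hwdef
  set φ : ℝ → ℝ := fun t => (T - t + h) ^ p with hφdef
  set g : ℝ → ℝ := fun t => φ t * N t with hgdef
  have hb : ∀ t : ℝ, t ≤ T → 0 < T - t + h := fun t ht => by linarith
  have hwpos : ∀ t : ℝ, t ≤ T → 0 < w t := fun t ht => Real.rpow_pos_of_pos (hb t ht) _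
  have hφpos : ∀ t : ℝ, t ≤ T → 0 < φ t := fun t ht => Real.rpow_pos_of_pos (hb t ht) _
  have hφw : ∀ t : ℝ, t ≤ T → φ t * w t = 1 := by
    intro t ht
    rw [hφdef, hwdef]
    simp only
    rw [← Real.rpow_add (hb t ht)]
    simp
  -- continuity
  have hNc : ContinuousOn N (Set.Icc 0 T) := fun t ht =>
    ((hN t ht).continuousAt).continuousWithinAt
  have hbc : Continuous (fun t : ℝ => T - t + h) := by continuity
  have hwc : ContinuousOn w (Set.Icc 0 T) := by
    apply ContinuousOn.rpow_const hbc.continuousOn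
    intro t ht; exact Or.inl (hb t ht.2).ne'
  have hφc : ContinuousOn φ (Set.Icc 0 T) := by
    apply ContinuousOn.rpow_const hbc.continuousOn
    intro t ht; exact Or.inl (hb t ht.2).ne'
  have hgc : ContinuousOn g (Set.Icc 0 T) := hφc.mul hNc
  -- integrability on subintervals
  have hsub12 : Set.uIcc t₁ t₂ ⊆ Set.Icc 0 T := by
    rw [Set.uIcc_of_le h₁₂.le]
    exact Set.Icc_subset_Icc ht₁.le ht₂T.le
  have hsub23 : Set.uIcc t₂ t₃ ⊆ Set.Icc 0 T := by
    rw [Set.uIcc_of_le h₂₃.le]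
    exact Set.Icc_subset_Icc (ht₁.trans h₁₂).le h₃T
  have hw12i : IntervalIntegrable w volume t₁ t₂ := (hwc.mono hsub12).intervalIntegrable
  have hw23i : IntervalIntegrable w volume t₂ t₃ := (hwc.mono hsub23).intervalIntegrable
  have hN12i : IntervalIntegrable N volume t₁ t₂ := (hNc.mono hsub12).intervalIntegrable
  set I₁₂ : ℝ := ∫ t in t₁..t₂, w t with hI12def
  set I₂₃ : ℝ := ∫ t in t₂..t₃, w t with hI23def
  set J₁₂ : ℝ := ∫ t in t₁..t₂, N t with hJ12def
  have hI12pos : 0 < I₁₂ :=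
    intervalIntegral_pos_of_pos_on hw12i (fun x hx => hwpos x (hx.2.trans ht₂T).le) h₁₂
  have hI23pos : 0 < I₂₃ :=
    intervalIntegral_pos_of_pos_on hw23i (fun x hx => hwpos x (hx.2.trans_le h₃T).le) h₂₃
  have hM0 : 0 < M := hM ▸ div_pos hI23pos hI12pos
  clear_value I₁₂ I₂₃ J₁₂
  -- derivative of φ and g
  have hφd : ∀ t : ℝ, t ≤ T → HasDerivAt φ (-1 * p * (T - t + h) ^ (p - 1)) t := by
    intro t ht
    have h1 : HasDerivAt (fun t : ℝ => T - t + h) (-1) t := by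
      simpa using ((hasDerivAt_id t).const_sub T).add_const h
    exact h1.rpow_const (Or.inl (hb t ht).ne')
  have hgd : ∀ t ∈ Set.Icc (0:ℝ) T,
      HasDerivAt g (-1 * p * (T - t + h) ^ (p - 1) * N t + φ t * N' t) t :=
    fun t ht => (hφd t ht.2).mul (hN t ht)
  -- bound on the derivative of g
  have hg'le : ∀ t ∈ Set.Ioo (0:ℝ) T,
      -1 * p * (T - t + h) ^ (p - 1) * N t + φ t * N' t ≤ C / h ^ 2 * φ t := by
    intro t ht
    have hbt := hb t ht.2.le
    have h2 : φ t * N' t ≤ φ t * (p / (T - t + h) * N t + C / h ^ 2) :=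
      mul_le_mul_of_nonneg_left (hineq t ht) (hφpos t ht.2.le).le
    have h3 : φ t * (p / (T - t + h) * N t + C / h ^ 2)
        = p * (T - t + h) ^ (p - 1) * N t + C / h ^ 2 * φ t := by
      have h4 : (T - t + h) ^ (p - 1) = φ t / (T - t + h) := by
        rw [hφdef]; simp only
        rw [Real.rpow_sub hbt, Real.rpow_one]
      rw [h4]
      field_simp
    rw [h3] at h2
    linarith
  -- φ is antitone on [t₁, T]
  have hφmono : ∀ s t : ℝ, s ≤ t → t ≤ T → φ t ≤ φ s := by
    intro s t hst htT
    exact Real.rpow_le_rpow (hb t htT).le (by linarith) hp0.le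
  have hgw : ∀ t : ℝ, t ≤ T → g t * w t = N t := by
    intro t ht
    show φ t * N t * w t = N t
    rw [mul_comm (φ t) (N t), mul_assoc, hφw t ht, mul_one]
  have hwopen : ContinuousOn w (Set.Iio (T + h)) := by
    apply ContinuousOn.rpow_const hbc.continuousOn
    intro x hx
    rw [Set.mem_Iio] at hx
    exact Or.inl (by linarith : (0:ℝ) < T - x + h).ne'
  have hwAt : ∀ t : ℝ, t ≤ T → ContinuousAt w t := by
    intro t ht
    apply ContinuousAt.rpow_const hbc.continuousAt
    exact Or.inl (hb t ht).ne'
  clear_value p w φ g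
  -- key pointwise bound
  have hkey : ∀ s ∈ Set.Icc t₁ t₂, ∀ t ∈ Set.Icc t₂ t₃,
      g t ≤ g s + C / h ^ 2 * (t₃ - t₁) * φ s := by
    intro s hs t ht
    have hst : s ≤ t := hs.2.trans ht.1
    have hsT : s ≤ T := hs.2.trans ht₂T.le
    have hmono : MonotoneOn (fun u : ℝ => C / h ^ 2 * φ s * u - g u) (Set.Icc s t₃) := by
      apply monotoneOn_of_deriv_nonneg (convex_Icc s t₃)
      · intro u hu
        have hu' : u ∈ Set.Icc (0:ℝ) T := ⟨le_trans (ht₁.le.trans hs.1) hu.1, hu.2.trans h₃T⟩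
        exact (((hasDerivAt_id u).const_mul (C / h ^ 2 * φ s)).sub
          (hgd u hu')).continuousAt.continuousWithinAt
      · intro u hu
        rw [interior_Icc] at hu
        have hu' : u ∈ Set.Icc (0:ℝ) T := ⟨(ht₁.trans_le (hs.1.trans hu.1.le)).le, (hu.2.trans_le h₃T).le⟩
        exact (((hasDerivAt_id u).const_mul (C / h ^ 2 * φ s)).sub
          (hgd u hu')).differentiableAt.differentiableWithinAt
      · intro u hu
        rw [interior_Icc] at hu
        have huIoo : u ∈ Set.Ioo (0:ℝ) T :=
          ⟨ht₁.trans_le (hs.1.trans hu.1.le), hu.2.trans_le h₃T⟩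
        have hd : HasDerivAt (fun u : ℝ => C / h ^ 2 * φ s * u - g u)
            (C / h ^ 2 * φ s * 1 - (-1 * p * (T - u + h) ^ (p - 1) * N u + φ u * N' u)) u :=
          ((hasDerivAt_id u).const_mul (C / h ^ 2 * φ s)).sub (hgd u ⟨huIoo.1.le, huIoo.2.le⟩)
        rw [hd.deriv]
        have h5 := hg'le u huIoo
        have h6 : φ u ≤ φ s := hφmono s u hu.1.le huIoo.2.le
        have h7 : C / h ^ 2 * φ u ≤ C / h ^ 2 * φ s := mul_le_mul_of_nonneg_left h6 hq
        linarith
    have h8 := hmono ⟨le_refl s, hst.trans ht.2⟩ ⟨hst, ht.2⟩ hst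
    have h9 : 0 ≤ C / h ^ 2 * φ s := mul_nonneg hq (hφpos s hsT).le
    have h10 : t - s ≤ t₃ - t₁ := by
      have := hs.1; have := ht.2; linarith
    linarith [mul_le_mul_of_nonneg_left h10 h9]
  -- integrated bound: g ≤ B on [t₂, t₃]
  set B : ℝ := (J₁₂ + C / h ^ 2 * (t₃ - t₁) * (t₂ - t₁)) / I₁₂ with hBdef
  clear_value B
  have hgB : ∀ t ∈ Set.Icc t₂ t₃, g t ≤ B := by
    intro t ht
    have h1 : ∀ s ∈ Set.Icc t₁ t₂, g t * w s ≤ N s + C / h ^ 2 * (t₃ - t₁) := by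
      intro s hs
      have hsT : s ≤ T := hs.2.trans ht₂T.le
      have h2 := hkey s hs t ht
      have hws := hwpos s hsT
      have h3 : g t * w s ≤ (g s + C / h ^ 2 * (t₃ - t₁) * φ s) * w s :=
        mul_le_mul_of_nonneg_right h2 hws.le
      have h5 : φ s * w s = 1 := hφw s hsT
      have h4 : (g s + C / h ^ 2 * (t₃ - t₁) * φ s) * w s
          = g s * w s + C / h ^ 2 * (t₃ - t₁) := by
        rw [add_mul, mul_assoc (C / h ^ 2 * (t₃ - t₁)), h5, mul_one]
      have h6 : g s * w s = N s := hgw s hsT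
      rw [h4, h6] at h3
      exact h3
    have hi1 : IntervalIntegrable (fun s => g t * w s) volume t₁ t₂ := hw12i.const_mul _
    have hi2 : IntervalIntegrable (fun s => N s + C / h ^ 2 * (t₃ - t₁)) volume t₁ t₂ :=
      hN12i.add intervalIntegrable_const
    have h7 := integral_mono_on h₁₂.le hi1 hi2 h1
    rw [intervalIntegral.integral_const_mul, integral_add hN12i intervalIntegrable_const,
      intervalIntegral.integral_const, smul_eq_mul] at h7
    have h8 : g t * I₁₂ ≤ J₁₂ + C / h ^ 2 * (t₃ - t₁) * (t₂ - t₁) := by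
      rw [hI12def, hJ12def]; linarith [h7]
    rw [hBdef]
    exact (le_div_iff₀ hI12pos).mpr h8
  -- FTC on [t₁, t₂]
  have hy2T : t₂ ∈ Set.Icc (0:ℝ) T := ⟨(ht₁.trans h₁₂).le, ht₂T.le⟩
  have hy1T : t₁ ∈ Set.Icc (0:ℝ) T := ⟨ht₁.le, ht₁T.le⟩
  have hy3T : t₃ ∈ Set.Icc (0:ℝ) T := ⟨(ht₁.trans (h₁₂.trans h₂₃)).le, h₃T⟩
  have hf : ∀ t ∈ Set.Icc (0:ℝ) T, HasDerivAt (fun u => Real.log (y u)) (y' t / y t) t :=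
    fun t ht => (hy t ht).log (hypos t ht).ne'
  have hyN : ∀ t ∈ Set.Ioo (0:ℝ) T, y' t / y t = -2 * N t := by
    intro t ht
    have h0 := heq t ht
    have hyp := hypos t ⟨ht.1.le, ht.2.le⟩
    rw [div_eq_iff hyp.ne']
    linear_combination 2 * h0
  have hFTC1 : ∫ t in t₁..t₂, (-2) * N t = Real.log (y t₂) - Real.log (y t₁) := by
    apply integral_eq_sub_of_hasDerivAt
    · intro t ht
      rw [Set.uIcc_of_le h₁₂.le] at ht
      have htI : t ∈ Set.Icc (0:ℝ) T := ⟨(ht₁.trans_le ht.1).le, ht.2.trans ht₂T.le⟩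
      have h1 := hf t htI
      rwa [hyN t ⟨ht₁.trans_le ht.1, ht.2.trans_lt ht₂T⟩] at h1
    · exact (hN12i.const_mul (-2))
  rw [intervalIntegral.integral_const_mul] at hFTC1
  -- monotone comparison on [t₂, t₃]
  have hWd : ∀ t ∈ Set.Icc t₂ t₃, HasDerivAt (fun u => ∫ x in t₂..u, w x) (w t) t := by
    intro t ht
    have htT : t ≤ T := ht.2.trans h₃T
    have hsub : Set.uIcc t₂ t ⊆ Set.Icc 0 T := by
      rw [Set.uIcc_of_le ht.1]
      exact Set.Icc_subset_Icc (ht₁.trans h₁₂).le htT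
    have htmem : t ∈ Set.Iio (T + h) := by rw [Set.mem_Iio]; linarith
    apply integral_hasDerivAt_right ((hwc.mono hsub).intervalIntegrable)
    · exact hwopen.stronglyMeasurableAtFilter isOpen_Iio t htmem
    · exact hwAt t htT
  have hmono2 : MonotoneOn (fun t => Real.log (y t) + 2 * B * ∫ x in t₂..t, w x)
      (Set.Icc t₂ t₃) := by
    apply monotoneOn_of_deriv_nonneg (convex_Icc t₂ t₃)
    · intro u hu
      have hu' : u ∈ Set.Icc (0:ℝ) T := ⟨(ht₁.trans h₁₂).le.trans hu.1, hu.2.trans h₃T⟩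
      exact ((hf u hu').add ((hWd u hu).const_mul (2 * B))).continuousAt.continuousWithinAt
    · intro u hu
      rw [interior_Icc] at hu
      have hu' : u ∈ Set.Icc (0:ℝ) T := ⟨((ht₁.trans h₁₂).trans hu.1).le, (hu.2.trans_le h₃T).le⟩
      exact ((hf u hu').add ((hWd u ⟨hu.1.le, hu.2.le⟩).const_mul
        (2 * B))).differentiableAt.differentiableWithinAt
    · intro u hu
      rw [interior_Icc] at hu
      have huIoo : u ∈ Set.Ioo (0:ℝ) T := ⟨(ht₁.trans h₁₂).trans hu.1, hu.2.trans_le h₃T⟩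
      have hu' : u ∈ Set.Icc (0:ℝ) T := ⟨huIoo.1.le, huIoo.2.le⟩
      have hd := (hf u hu').add ((hWd u ⟨hu.1.le, hu.2.le⟩).const_mul (2 * B))
      rw [show (fun t => Real.log (y t) + 2 * B * ∫ x in t₂..t, w x) = ((fun u => Real.log (y u)) + fun y => 2 * B * ∫ x in t₂..y, w x) from rfl, hd.deriv]
      have h1 : y' u / y u = -2 * N u := hyN u huIoo
      have h2 : g u ≤ B := hgB u ⟨hu.1.le, hu.2.le⟩
      have h3 : N u ≤ B * w u := by
        have h4 : g u * w u = N u := hgw u huIoo.2.le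
        rw [← h4]
        exact mul_le_mul_of_nonneg_right h2 (hwpos u huIoo.2.le).le
      rw [h1]
      linarith
  have hstep := hmono2 ⟨le_refl t₂, h₂₃.le⟩ ⟨h₂₃.le, le_refl t₃⟩ h₂₃.le
  simp only [intervalIntegral.integral_same] at hstep
  -- hstep : log y t₂ + 2B*0 ≤ log y t₃ + 2B*I₂₃
  have hstep' : Real.log (y t₂) ≤ Real.log (y t₃) + 2 * B * I₂₃ := by
    rw [hI23def]; linarith [hstep]
  -- combine
  have hBI : B * I₂₃ = M * J₁₂ + C / h ^ 2 * (t₃ - t₁) * (t₂ - t₁) * M := by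
    rw [hBdef, hM]
    field_simp
  have hMD : 2 * (C / h ^ 2 * (t₃ - t₁) * (t₂ - t₁) * M) ≤ D := by
    rw [hD]
    have h1 : (t₂ - t₁) * M ≤ (t₃ - t₁) * (1 + M) := by
      have a1 : (t₂ - t₁) * M ≤ (t₃ - t₁) * M :=
        mul_le_mul_of_nonneg_right (by linarith) hM0.le
      have a2 : (t₃ - t₁) * M ≤ (t₃ - t₁) * (1 + M) :=
        mul_le_mul_of_nonneg_left (by linarith) (by linarith)
      linarith
    have h2 : 0 ≤ 2 * (C / h ^ 2) * (t₃ - t₁) := by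
      have h3 : (0:ℝ) ≤ t₃ - t₁ := by linarith
      positivity
    have h4 := mul_le_mul_of_nonneg_left h1 h2
    have e1 : 2 * (C / h ^ 2 * (t₃ - t₁) * (t₂ - t₁) * M)
        = 2 * (C / h ^ 2) * (t₃ - t₁) * ((t₂ - t₁) * M) := by ring
    have e2 : 2 * (1 + M) * (t₃ - t₁) ^ 2 * C / h ^ 2
        = 2 * (C / h ^ 2) * (t₃ - t₁) * ((t₃ - t₁) * (1 + M)) := by ring
    rw [e1, e2]; exact h4
  have hfinal : (1 + M) * Real.log (y t₂) ≤ M * Real.log (y t₁) + Real.log (y t₃) + D := by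
    rw [← hJ12def] at hFTC1
    have e1 : M * Real.log (y t₂) = M * Real.log (y t₁) + M * (-2 * J₁₂) := by
      linear_combination (-M) * hFTC1
    linarith [hstep', hBI, hMD, e1]
  have hy₁ := hypos t₁ hy1T
  have hy₂ := hypos t₂ hy2T
  have hy₃ := hypos t₃ hy3T
  rw [Real.rpow_def_of_pos hy₂, Real.rpow_def_of_pos hy₁, ← Real.exp_log hy₃,
    ← Real.exp_add, ← Real.exp_add]
  apply Real.exp_le_exp.mpr
  linarith [hfinal]
end

section
/- Let M, C₁, C₂ > 0, D ≥ 0, G ≥ 1, and let A, B, E ≥ 0 be real numbers with A ≤ B. Suppose that for every h > 0 one has A^{1+M} ≤ e^D e^{C₁/h} B^M E + e^D G e^{−C₂/h} B^{1+M}. Then, setting σ = M + (1+M)C₁/C₂, one has A^{1+σ} ≤ 2^{1+C₁/C₂} e^{D(1+C₁/C₂)} G^{C₁/C₂} B^σ E. -/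
/-- Optimization-in-`h` argument (Step 7 of the paper): if for every `h > 0`
one has `A^{1+M} ≤ e^D e^{C₁/h} B^M E + e^D G e^{-C₂/h} B^{1+M}` with
`A ≤ B`, then with `σ = M + (1+M)C₁/C₂` one gets
`A^{1+σ} ≤ 2^{1+C₁/C₂} e^{D(1+C₁/C₂)} G^{C₁/C₂} B^σ E`. -/
theorem optimize_in_h (M C₁ C₂ D G A B E : ℝ)
    (hM : 0 < M) (hC₁ : 0 < C₁) (hC₂ : 0 < C₂) (hD : 0 ≤ D) (hG : 1 ≤ G)
    (hA : 0 ≤ A) (hB : 0 ≤ B) (hE : 0 ≤ E) (hAB : A ≤ B)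
    (h : ∀ h' : ℝ, 0 < h' →
      A ^ (1 + M) ≤ Real.exp D * Real.exp (C₁ / h') * B ^ M * E
        + Real.exp D * G * Real.exp (-C₂ / h') * B ^ (1 + M)) :
    A ^ (1 + (M + (1 + M) * C₁ / C₂)) ≤
      (2 : ℝ) ^ (1 + C₁ / C₂) * Real.exp (D * (1 + C₁ / C₂)) * G ^ (C₁ / C₂)
        * B ^ (M + (1 + M) * C₁ / C₂) * E := by
  rcases eq_or_lt_of_le hA with hA0 | hA0
  · rw [← hA0, Real.zero_rpow (by positivity)]
    positivity
  have hB0 : 0 < B := lt_of_lt_of_le hA0 hAB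
  have hG0 : (0:ℝ) < G := lt_of_lt_of_le one_pos hG
  set c : ℝ := C₁ / C₂ with hc
  have hc0 : 0 < c := div_pos hC₁ hC₂
  set R : ℝ := B / A with hRdef
  have hR1 : 1 ≤ R := (one_le_div hA0).mpr hAB
  have hR0 : 0 < R := lt_of_lt_of_le one_pos hR1
  have hRp1 : (1:ℝ) ≤ R ^ (1 + M) := Real.one_le_rpow hR1 (by linarith)
  set K : ℝ := 2 * Real.exp D * G * R ^ (1 + M) with hKdef
  have hED1 : (1:ℝ) ≤ Real.exp D := Real.one_le_exp hD
  have hK2 : (2:ℝ) ≤ K := by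
    have h1 : (2:ℝ) * 1 * 1 * 1 ≤ 2 * Real.exp D * G * R ^ (1 + M) := by
      apply mul_le_mul (by nlinarith) hRp1 (by norm_num) (by positivity)
    simpa using h1
  have hK1 : (1:ℝ) < K := by linarith
  have hK0 : (0:ℝ) < K := by linarith
  have hlog : 0 < Real.log K := Real.log_pos hK1
  have hh : 0 < C₂ / Real.log K := div_pos hC₂ hlog
  have key := h _ hh
  have e1 : Real.exp (-C₂ / (C₂ / Real.log K)) = K⁻¹ := by
    have : -C₂ / (C₂ / Real.log K) = -Real.log K := by
      field_simp
    rw [this, Real.exp_neg, Real.exp_log hK0]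
  have e2 : Real.exp (C₁ / (C₂ / Real.log K)) = K ^ c := by
    have : C₁ / (C₂ / Real.log K) = Real.log K * c := by
      rw [hc]; field_simp
    rw [this, Real.rpow_def_of_pos hK0]
  rw [e1, e2] at key
  have hBp : (0:ℝ) < B ^ (1 + M) := Real.rpow_pos_of_pos hB0 _
  have hAp : (0:ℝ) < A ^ (1 + M) := Real.rpow_pos_of_pos hA0 _
  have hRdiv : R ^ (1 + M) = B ^ (1 + M) / A ^ (1 + M) :=
    Real.div_rpow hB (le_of_lt hA0) _
  have e3 : Real.exp D * G * K⁻¹ * B ^ (1 + M) = A ^ (1 + M) / 2 := by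
    rw [hKdef, hRdiv]
    field_simp
  rw [e3] at key
  have key2 : A ^ (1 + M) ≤ 2 * (Real.exp D * K ^ c * B ^ M * E) := by linarith
  -- now multiply by A ^ ((1+M)*c)
  have hApc : (0:ℝ) ≤ A ^ ((1 + M) * c) := le_of_lt (Real.rpow_pos_of_pos hA0 _)
  have hmul := mul_le_mul_of_nonneg_right key2 hApc
  have eL : A ^ (1 + (M + (1 + M) * C₁ / C₂)) = A ^ (1 + M) * A ^ ((1 + M) * c) := by
    rw [← Real.rpow_add hA0]
    congr 1
    rw [hc]; ring
  have eRA : R ^ ((1 + M) * c) * A ^ ((1 + M) * c) = B ^ ((1 + M) * c) := by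
    rw [← Real.mul_rpow (le_of_lt hR0) hA, hRdef, div_mul_cancel₀ _ (ne_of_gt hA0)]
  have eK : K ^ c = 2 ^ c * Real.exp (D * c) * G ^ c * R ^ ((1 + M) * c) := by
    rw [hKdef]
    rw [Real.mul_rpow (by positivity) (by positivity),
        Real.mul_rpow (by positivity) (by positivity),
        Real.mul_rpow (by positivity) (by positivity),
        ← Real.rpow_mul (le_of_lt hR0), Real.exp_mul]
  have eR : (2 : ℝ) ^ (1 + c) * Real.exp (D * (1 + c)) * G ^ c
        * B ^ (M + (1 + M) * C₁ / C₂) * E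
      = 2 * (Real.exp D * K ^ c * B ^ M * E) * A ^ ((1 + M) * c) := by
    have eB : B ^ (M + (1 + M) * C₁ / C₂) = B ^ M * B ^ ((1 + M) * c) := by
      rw [← Real.rpow_add hB0]
      congr 1
      rw [hc]; ring
    rw [eB, eK, ← eRA, Real.rpow_add (by norm_num : (0:ℝ) < 2), Real.rpow_one,
      mul_add, mul_one, Real.exp_add]
    ring
  calc A ^ (1 + (M + (1 + M) * C₁ / C₂))
      = A ^ (1 + M) * A ^ ((1 + M) * c) := eL
    _ ≤ 2 * (Real.exp D * K ^ c * B ^ M * E) * A ^ ((1 + M) * c) := hmul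
    _ = (2 : ℝ) ^ (1 + c) * Real.exp (D * (1 + c)) * G ^ c
        * B ^ (M + (1 + M) * C₁ / C₂) * E := eR.symm
end
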